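/- (Abstract continuity gives representation at limits) Suppose μ is a singular cardinal, σ < θ regular with σ ≤ cf(μ) < θ, and λ a regular cardinal > μ. Assume the Continuity principle: if λ ∈ PP_{Γ(θ,σ)}(η) for an unbounded set of singular η < μ with σ ≤ cf(η) < θ < η, then λ ∈ PP_{Γ(θ,σ)}(μ). Assume also that the set X = {η ∈ X_{Γ(θ,σ)}(μ) : cf(η) ≤ cf(μ)} is unbounded in μ, where X_{Γ(θ,σ)}(μ) is the set of η < μ with σ ≤ cf(η) < θ < η, η eventually Γ(θ,σ)-closed, and PP_{Γ(θ,σ)}(μ) ⊆ PP_{Γ(θ,σ)}(η). Assume furthermore that for eventually Γ(θ,σ)-closed η, PP_{Γ(θ,σ)}(η) = PP_{Γ((cf η)⁺,σ)}(η) (Theorem 3.4). Then PP_{Γ(θ,σ)}(μ) = PP_{Γ((cf μ)⁺,σ)}(μ) = PP_{Γ(σ)}(μ). -/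

import Mathlib

open Cardinal

noncomputable section

/-- `J` is a (proper) ideal of subsets of `A`. -/
def IsIdealOn (A : Set Cardinal.{0}) (J : Set (Set Cardinal.{0})) : Prop :=
  (∀ B ∈ J, B ⊆ A) ∧ (∅ : Set Cardinal.{0}) ∈ J ∧ A ∉ J ∧
  (∀ B ∈ J, ∀ B' : Set Cardinal.{0}, B' ⊆ B → B' ∈ J) ∧
  (∀ B ∈ J, ∀ B' ∈ J, B ∪ B' ∈ J)

/-- `J` is closed under unions of fewer than `σ` of its members. -/
def SigmaComplete (σ : Cardinal.{0}) (J : Set (Set Cardinal.{0})) : Prop :=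
  ∀ 𝒜 : Set (Set Cardinal.{0}), 𝒜 ⊆ J → #𝒜 < Cardinal.lift.{1,0} σ → ⋃₀ 𝒜 ∈ J

/-- `J` contains every subset of `A` that is bounded below `μ`. -/
def ExtendsBounded (μ : Cardinal.{0}) (A : Set Cardinal.{0}) (J : Set (Set Cardinal.{0})) : Prop :=
  ∀ B : Set Cardinal.{0}, B ⊆ A → (∃ c < μ, ∀ b ∈ B, b < c) → B ∈ J

/-- `f < g` modulo the ideal `J` on `A` (for functions with domain containing `A`,
with values viewed as ordinals below each `a ∈ A`). -/
def ltMod (A : Set Cardinal.{0}) (J : Set (Set Cardinal.{0})) (f g : Cardinal.{0} → Ordinal.{0}) : Prop :=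
  {a ∈ A | g a ≤ f a} ∈ J

/-- `lam` is the true cofinality of `∏ A / J`: there is a `<_J`-increasing and
cofinal sequence of length `lam` in the product. -/
def IsTrueCofinality (A : Set Cardinal.{0}) (J : Set (Set Cardinal.{0})) (lam : Cardinal.{0}) : Prop :=
  ∃ f : Ordinal.{0} → (Cardinal.{0} → Ordinal.{0}),
    (∀ α < lam.ord, ∀ a ∈ A, f α a < a.ord) ∧
    (∀ α β : Ordinal, α < β → β < lam.ord → ltMod A J (f α) (f β)) ∧
    (∀ g : Cardinal.{0} → Ordinal.{0}, (∀ a ∈ A, g a < a.ord) →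
      ∃ α < lam.ord, ltMod A J g (f α))

/-- `pcf A`: the set of cardinals arising as the true cofinality of `∏ A / J`
for some ideal `J` on `A`. -/
def pcf (A : Set Cardinal.{0}) : Set Cardinal.{0} :=
  {lam | ∃ J, IsIdealOn A J ∧ IsTrueCofinality A J lam}

/-- `σ`-complete pcf. -/
def pcfSigma (σ : Cardinal.{0}) (A : Set Cardinal.{0}) : Set Cardinal.{0} :=
  {lam | ∃ J, IsIdealOn A J ∧ SigmaComplete σ J ∧ IsTrueCofinality A J lam}

/-- `(A, J)` is a representation of `lam` at the singular cardinal `μ`: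
`A` is a progressive cofinal set of regular cardinals below `μ`, `J` is an ideal
on `A` extending the bounded ideal, `lam = tcf(∏ A / J)`, and `lam = max pcf A`. -/
def IsRepresentation (μ lam : Cardinal.{0}) (A : Set Cardinal.{0}) (J : Set (Set Cardinal.{0})) : Prop :=
  (∀ a ∈ A, a.IsRegular ∧ a < μ) ∧
  (∀ c < μ, ∃ a ∈ A, c ≤ a) ∧
  #A < Cardinal.lift.{1,0} (sInf A) ∧
  IsIdealOn A J ∧ ExtendsBounded μ A J ∧
  IsTrueCofinality A J lam ∧
  lam ∈ pcf A ∧ (∀ lam' ∈ pcf A, lam' ≤ lam)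

/-- `lam` is `Γ(θ,σ)`-representable at `μ`. -/
def GammaRepresentable (μ lam θ σ : Cardinal.{0}) : Prop :=
  ∃ A J, IsRepresentation μ lam A J ∧ #A < Cardinal.lift.{1,0} θ ∧ SigmaComplete σ J

/-- `PP_{Γ(θ,σ)}(μ)`. -/
def PP (μ θ σ : Cardinal.{0}) : Set Cardinal.{0} := {lam | GammaRepresentable μ lam θ σ}

/-- `pp_{Γ(θ,σ)}(μ)`. -/
def pp (μ θ σ : Cardinal.{0}) : Cardinal := sSup (PP μ θ σ)

/-- `μ` is a singular cardinal. -/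
def Sing (μ : Cardinal.{0}) : Prop := ℵ₀ ≤ μ ∧ ¬μ.IsRegular

/-- `μ` is eventually `Γ(θ,σ)`-closed. -/
def EvClosed (μ θ σ : Cardinal.{0}) : Prop :=
  ∃ ξ < μ, ∀ ν, ξ < ν → ν < μ → Sing ν → σ ≤ ν.ord.cof → ν.ord.cof < θ →
    pp ν θ σ < μ

lemma PP_mono (μ σ θ₁ θ₂ : Cardinal.{0}) (h : θ₁ ≤ θ₂) : PP μ θ₁ σ ⊆ PP μ θ₂ σ := by
  rintro lam ⟨A, J, hrep, hlt, hs⟩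
  exact ⟨A, J, hrep, hlt.trans_le (Cardinal.lift_le.2 h), hs⟩

theorem PP_eq_of_unbounded_closed (μ σ θ : Cardinal.{0})
    (hμ : Sing μ) (hσ : σ.IsRegular) (hθ : θ.IsRegular)
    (h1 : σ ≤ μ.ord.cof) (h2 : μ.ord.cof < θ)
    (hcont : ∀ θ' lam : Cardinal.{0}, θ'.IsRegular → σ < θ' → μ.ord.cof < θ' →
      (∀ ξ < μ, ∃ η, ξ < η ∧ η < μ ∧ Sing η ∧ σ ≤ η.ord.cof ∧ η.ord.cof < θ' ∧
        θ' < η ∧ lam ∈ PP η θ' σ) →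
      lam ∈ PP μ θ' σ)
    (hX : ∀ ξ < μ, ∃ η, ξ < η ∧ η < μ ∧ Sing η ∧ σ ≤ η.ord.cof ∧ η.ord.cof < θ ∧
      θ < η ∧ EvClosed η θ σ ∧ PP μ θ σ ⊆ PP η θ σ ∧ η.ord.cof ≤ μ.ord.cof)
    (h34 : ∀ η, η < μ → Sing η → σ ≤ η.ord.cof → η.ord.cof < θ → EvClosed η θ σ →
      PP η θ σ = PP η (Order.succ η.ord.cof) σ) :
    PP μ θ σ = PP μ (Order.succ μ.ord.cof) σ := by
  have hcf : ℵ₀ ≤ μ.ord.cof := by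
    rw [Ordinal.aleph0_le_cof]
    exact Cardinal.isSuccLimit_ord hμ.1
  have hsuccreg : (Order.succ μ.ord.cof).IsRegular := Cardinal.isRegular_succ hcf
  have hlt₁ : μ.ord.cof < Order.succ μ.ord.cof := Order.lt_succ _
  have hsuccle : Order.succ μ.ord.cof ≤ θ := Order.succ_le_of_lt h2
  apply Set.Subset.antisymm
  · intro lam hlam
    apply hcont (Order.succ μ.ord.cof) lam hsuccreg (lt_of_le_of_lt h1 hlt₁) hlt₁
    intro ξ hξ
    obtain ⟨η, hηξ, hημ, hηsing, hησ, hηcofθ, hθη, hev, hsub, hcofle⟩ := hX ξ hξ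
    refine ⟨η, hηξ, hημ, hηsing, hησ, lt_of_le_of_lt hcofle hlt₁,
      lt_of_le_of_lt hsuccle hθη, ?_⟩
    have h1 : lam ∈ PP η θ σ := hsub hlam
    rw [h34 η hημ hηsing hησ hηcofθ hev] at h1
    exact PP_mono η σ _ _ (Order.succ_le_succ hcofle) h1
  · exact PP_mono μ σ _ _ hsuccle
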